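/- For all positive integers m and t there exists n₀ such that for every n ≥ n₀, every tree T on n vertices, and every red-blue edge-coloring of the complete graph on (n − 1)(m − 1) + t − 1 vertices belonging to the family 𝒢_{n,m,t}, the coloring contains no red copy of T and no blue copy of tK_m. -/
import Mathlib


/-- `ContainsCopy G H`: the graph `G` contains a copy of the graph `H` (as a subgraph),
i.e. there is an injective map of the vertices of `H` into `G` carrying edges to edges. -/
def ContainsCopy {α β : Type*} (G : SimpleGraph α) (H : SimpleGraph β) : Prop :=
  ∃ f : β ↪ α, ∀ ⦃u v : β⦄, H.Adj u v → G.Adj (f u) (f v)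

/-- `Arrows N H₁ H₂` : `K_N → (H₁, H₂)`, i.e. every red-blue coloring of the edges of the
complete graph on `N` vertices (described by its graph `R` of red edges; the blue edges are
those of `Rᶜ`) contains a red copy of `H₁` or a blue copy of `H₂`. -/
def Arrows (N : ℕ) {α β : Type*} (H₁ : SimpleGraph α) (H₂ : SimpleGraph β) : Prop :=
  ∀ R : SimpleGraph (Fin N), ContainsCopy R H₁ ∨ ContainsCopy Rᶜ H₂

/-- The Ramsey number `r(H₁, H₂)`: the least `N` with `K_N → (H₁, H₂)`. -/
noncomputable def ramseyNumber {α β : Type*} (H₁ : SimpleGraph α) (H₂ : SimpleGraph β) : ℕ :=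
  sInf {N | Arrows N H₁ H₂}

/-- `tK t m` : the disjoint union of `t` copies of the complete graph `K_m`. -/
def tK (t m : ℕ) : SimpleGraph (Fin t × Fin m) :=
  SimpleGraph.fromRel (fun a b => a.1 = b.1)

/-- `starG k` : the star `K_{1,k}`, with center `none` and `k` leaves. -/
def starG (k : ℕ) : SimpleGraph (Option (Fin k)) :=
  SimpleGraph.fromRel (fun a _ => a = none)

/-- A red-blue coloring of a complete graph (described by its graph `R` of red edges; the blue
edges are those of `Rᶜ`) belongs to the family `𝒢_{n,m,t}` if the vertex set can be partitioned
into classes `A₁, …, A_{m-1}` of size `n-1` (labelled `some i`) and a class `B` of size `t-1`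
(labelled `none`) such that every edge inside some `Aᵢ` is red and every edge joining two
different classes is blue (edges inside `B` are arbitrary). -/
def GFamily (n m t : ℕ) {V : Type*} [Fintype V] (R : SimpleGraph V) : Prop :=
  ∃ f : V → Option (Fin (m - 1)),
    (∀ i : Fin (m - 1), (Finset.univ.filter fun v => f v = some i).card = n - 1) ∧
    ((Finset.univ.filter fun v => f v = none).card = t - 1) ∧
    (∀ u v : V, u ≠ v → ∀ i : Fin (m - 1), f u = some i → f v = some i → R.Adj u v) ∧
    (∀ u v : V, f u ≠ f v → ¬ R.Adj u v)

/-- `RedMatchingBetween R X Y k` : there are `k` pairwise vertex-disjoint red edges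
(edges of `R`) joining `X` to `Y`. -/
def RedMatchingBetween {V : Type*} (R : SimpleGraph V) (X Y : Finset V) (k : ℕ) : Prop :=
  ∃ e : Fin k → V × V,
    (∀ p, (e p).1 ∈ X ∧ (e p).2 ∈ Y ∧ R.Adj (e p).1 (e p).2) ∧
    (∀ p q, p ≠ q → (e p).1 ≠ (e q).1 ∧ (e p).1 ≠ (e q).2 ∧
      (e p).2 ≠ (e q).1 ∧ (e p).2 ≠ (e q).2)

/-- `IsBlueMatching R k e` : in the red-blue colored complete graph with red graph `R`,
the `k` pairs given by `e` form a blue matching (pairwise vertex-disjoint blue edges). -/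
def IsBlueMatching {V : Type*} (R : SimpleGraph V) (k : ℕ) (e : Fin k → V × V) : Prop :=
  (∀ p, (e p).1 ≠ (e p).2 ∧ ¬ R.Adj (e p).1 (e p).2) ∧
  (∀ p q, p ≠ q → (e p).1 ≠ (e q).1 ∧ (e p).1 ≠ (e q).2 ∧
    (e p).2 ≠ (e q).1 ∧ (e p).2 ≠ (e q).2)

/-- `KplusStar M k` : the complete graph on the `M` vertices `some j`, together with one
extra vertex `none` joined to exactly `k` of them (namely `some j` for `j < k`). -/
def KplusStar (M k : ℕ) : SimpleGraph (Option (Fin M)) :=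
  SimpleGraph.fromRel (fun a b =>
    (a ≠ none ∧ b ≠ none) ∨ (a = none ∧ ∃ j : Fin M, b = some j ∧ (j : ℕ) < k))

/-- `ArrowsOn H H₁ H₂` : `H → (H₁, H₂)`, i.e. every red-blue coloring of the edges of the
host graph `H` (red graph `R ≤ H`, blue graph `H \ R`) contains a red copy of `H₁` or a
blue copy of `H₂`. -/
def ArrowsOn {V α β : Type*} (H : SimpleGraph V) (H₁ : SimpleGraph α) (H₂ : SimpleGraph β) :
    Prop :=
  ∀ R : SimpleGraph V, R ≤ H → ContainsCopy R H₁ ∨ ContainsCopy (H \ R) H₂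

/-- The star-critical Ramsey number `r₊(H₁, H₂)`: the least `k` such that the graph obtained
from `K_{N-1}` by adding one new vertex joined to exactly `k` of its vertices arrows
`(H₁, H₂)`, where `N = r(H₁, H₂)`. -/
noncomputable def starCritRamsey {α β : Type*} (H₁ : SimpleGraph α) (H₂ : SimpleGraph β) : ℕ :=
  sInf {k | ArrowsOn (KplusStar (ramseyNumber H₁ H₂ - 1) k) H₁ H₂}

/-- The chromatic number of `H`, as a natural number. -/
noncomputable def chromNum {β : Type*} (H : SimpleGraph β) : ℕ :=
  H.chromaticNumber.toNat

/-- The chromatic surplus `s(H)`: the minimum cardinality of a color class over all proper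
colorings of `H` with `χ(H)` colors. -/
noncomputable def chromSurplus {β : Type*} [Fintype β] (H : SimpleGraph β) : ℕ :=
  sInf {s | ∃ C : H.Coloring (Fin (chromNum H)),
    s = sInf {k | ∃ i : Fin (chromNum H),
      k = (Finset.univ.filter fun v => C v = i).card}}

/-- For all positive integers `m` and `t` there exists `n₀` such that for every `n ≥ n₀`,
every tree `T` on `n` vertices and every red-blue edge-coloring of the complete graph on
`(n − 1)(m − 1) + t − 1` vertices belonging to the family `𝒢_{n,m,t}`, the coloring contains
no red copy of `T` and no blue copy of `tK_m`. -/
theorem gfamily_is_critical (m t : ℕ) (hm : 1 ≤ m) (ht : 1 ≤ t) :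
    ∃ n₀ : ℕ, ∀ n : ℕ, n₀ ≤ n → ∀ T : SimpleGraph (Fin n), T.IsTree →
      ∀ R : SimpleGraph (Fin ((n - 1) * (m - 1) + t - 1)),
        GFamily n m t R →
        ¬ ContainsCopy R T ∧ ¬ ContainsCopy Rᶜ (tK t m) := by
  refine ⟨t, fun n hn T hT R hR => ?_⟩
  obtain ⟨f, hA, hB, hred, hblue⟩ := hR
  constructor
  · rintro ⟨emb, hemb⟩
    have hconst : ∀ u v : Fin n, f (emb u) = f (emb v) := by
      intro u v
      obtain ⟨w⟩ := hT.isConnected.preconnected u v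
      induction w with
      | nil => rfl
      | cons h w ih =>
        refine Eq.trans ?_ ih
        by_contra hne
        exact (hblue _ _ hne) (hemb h)
    have hn1 : 1 ≤ n := le_trans ht hn
    set v0 : Fin n := ⟨0, by omega⟩ with hv0
    have hcard : ∀ P : Option (Fin (m-1)),
        (∀ u : Fin n, f (emb u) = P) →
        n ≤ (Finset.univ.filter fun v => f v = P).card := by
      intro P hP
      have := Finset.card_le_card_of_injOn
        (s := (Finset.univ : Finset (Fin n)))
        (t := Finset.univ.filter fun v => f v = P) (fun u => emb u)
        (fun u _ => by simp [hP u]) (fun a _ b _ h => emb.injective h)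
      simpa using this
    cases h0 : f (emb v0) with
    | none =>
      have := hcard none (fun u => (hconst u v0).trans h0)
      rw [hB] at this
      omega
    | some i =>
      have := hcard (some i) (fun u => (hconst u v0).trans h0)
      rw [hA i] at this
      omega
  · rintro ⟨g, hg⟩
    have key : ∀ k : Fin t, ∃ j : Fin m, f (g (k, j)) = none := by
      intro k
      by_contra hcon
      push_neg at hcon
      have hsome : ∀ j : Fin m, ∃ i : Fin (m-1), f (g (k, j)) = some i := by
        intro j
        cases hfj : f (g (k, j)) with
        | none => exact absurd hfj (hcon j)
        | some i => exact ⟨i, rfl⟩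
      choose h hh using hsome
      have hinj : Function.Injective h := by
        intro j1 j2 hje
        by_contra hne
        have hadj : (tK t m).Adj (k, j1) (k, j2) := by
          refine ⟨fun hc => hne (by simpa using congrArg Prod.snd hc), Or.inl rfl⟩
        have hblueadj := hg hadj
        have hgneq : g (k, j1) ≠ g (k, j2) := hblueadj.ne
        have : R.Adj (g (k, j1)) (g (k, j2)) :=
          hred _ _ hgneq (h j1) (hh j1) (by rw [hje]; exact hh j2)
        exact hblueadj.2 this
      have := Fintype.card_le_of_injective h hinj
      simp only [Fintype.card_fin] at this
      omega
    choose b hb using key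
    have hcard : t ≤ (Finset.univ.filter fun v => f v = none).card := by
      have := Finset.card_le_card_of_injOn
        (s := (Finset.univ : Finset (Fin t)))
        (t := Finset.univ.filter fun v => f v = none) (fun k : Fin t => g (k, b k))
        (fun k _ => by simp [hb k])
        (fun k1 _ k2 _ h => by
          have := g.injective h
          exact (Prod.mk.injEq _ _ _ _).mp this |>.1)
      simpa using this
    rw [hB] at hcard
    omega
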